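/- For the composite Bernstein cubature functional $\overline{\mathcal{I}}$ on $[0,1]^2$ with the Euclidean metric $d_2$, the second-moment-type quantity satisfies the exact identity $\overline{\mathcal{I}}^2(d_2^2(\cdot,\cdot)) = \frac{1}{3}\left(1 + \frac{1}{m_1^2 n_1} + \frac{1}{m_2^2 n_2}\right)$, where $\overline{\mathcal{I}}^2(d_2^2)$ denotes the double sum $\sum \frac{1}{m_1^2 m_2^2 (n_1+1)^2(n_2+1)^2}\left[\left(\frac{k_1-k}{m_1} + \frac{i_1-i}{m_1 n_1}\right)^2 + \left(\frac{l_1-l}{m_2} + \frac{j_1-j}{m_2 n_2}\right)^2\right]$ over all $1 \le k, k_1 \le m_1$, $1 \le l, l_1 \le m_2$, $0 \le i, i_1 \le n_1$, $0 \le j, j_1 \le n_2$. -/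

import Mathlib

open Finset

lemma sumR1 (n : ℕ) : ∑ i ∈ range (n+1), (i:ℝ) = n*(n+1)/2 := by
  induction n with
  | zero => simp
  | succ n ih => rw [Finset.sum_range_succ, ih]; push_cast; ring

lemma sumR2 (n : ℕ) : ∑ i ∈ range (n+1), (i:ℝ)^2 = n*(n+1)*(2*n+1)/6 := by
  induction n with
  | zero => simp
  | succ n ih => rw [Finset.sum_range_succ, ih]; push_cast; ring

lemma sumI1 (m : ℕ) : ∑ k ∈ Icc 1 m, (k:ℝ) = m*(m+1)/2 := by
  induction m with
  | zero => simp
  | succ m ih => rw [Finset.sum_Icc_succ_top (by omega), ih]; push_cast; ring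

lemma sumI2 (m : ℕ) : ∑ k ∈ Icc 1 m, (k:ℝ)^2 = m*(m+1)*(2*m+1)/6 := by
  induction m with
  | zero => simp
  | succ m ih => rw [Finset.sum_Icc_succ_top (by omega), ih]; push_cast; ring

lemma four (m n : ℕ) (g : ℕ → ℕ → ℝ) :
    ∑ k ∈ Icc 1 m, ∑ k₁ ∈ Icc 1 m, ∑ i ∈ range (n+1), ∑ i₁ ∈ range (n+1),
      (g k₁ i₁ - g k i)^2
    = 2*(m*(n+1)) * (∑ k ∈ Icc 1 m, ∑ i ∈ range (n+1), (g k i)^2)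
      - 2*(∑ k ∈ Icc 1 m, ∑ i ∈ range (n+1), g k i)^2 := by
  have h : ∀ a b : ℝ, (a - b)^2 = a^2 - 2*(b*a) + b^2 := by intros; ring
  simp_rw [h, Finset.sum_add_distrib, Finset.sum_sub_distrib, ← Finset.mul_sum,
    ← Finset.sum_mul, Finset.sum_const, Nat.card_Icc, Finset.card_range,
    nsmul_eq_mul, Nat.add_sub_cancel]
  rw [← Finset.sum_mul_sum]
  rw [show (∑ x ∈ Icc 1 m, (↑(n + 1):ℝ) * ∑ x_1 ∈ range (n + 1), g x x_1 ^ 2)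
      = (↑(n+1):ℝ) * ∑ x ∈ Icc 1 m, ∑ x_1 ∈ range (n + 1), g x x_1 ^ 2 from
    (Finset.mul_sum _ _ _).symm]
  rw [show (∑ x ∈ Icc 1 m, (↑m:ℝ) * ∑ x_1 ∈ range (n + 1), (↑(n + 1):ℝ) * g x x_1 ^ 2)
      = (↑m:ℝ) * ((↑(n+1):ℝ) * ∑ x ∈ Icc 1 m, ∑ x_1 ∈ range (n + 1), g x x_1 ^ 2) from by
    simp_rw [← Finset.mul_sum]]
  push_cast
  ring

lemma sumG1 (m n : ℕ) :
    ∑ k ∈ Icc 1 m, ∑ i ∈ range (n+1), ((k:ℝ)*n + i)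
    = (n+1)*(n*(m*(m+1)/2)) + m*(n*(n+1)/2) := by
  simp only [Finset.sum_add_distrib, Finset.sum_const, Finset.card_range, nsmul_eq_mul,
    sumR1, sumI1, sumI2, sumR2, ← Finset.mul_sum, ← Finset.sum_mul, Nat.card_Icc,
    Nat.add_sub_cancel]
  push_cast; ring

lemma sumG2 (m n : ℕ) :
    ∑ k ∈ Icc 1 m, ∑ i ∈ range (n+1), ((k:ℝ)*n + i)^2
    = (n+1)*(n^2*(m*(m+1)*(2*m+1)/6)) + 2*n*(n*(n+1)/2)*(m*(m+1)/2)
      + m*(n*(n+1)*(2*n+1)/6) := by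
  have h : ∀ (k i : ℕ), ((k:ℝ)*n + i)^2 = (k:ℝ)^2*n^2 + 2*n*((k:ℝ)*i) + (i:ℝ)^2 := by
    intros; ring
  simp only [h, Finset.sum_add_distrib, Finset.sum_const, Finset.card_range, nsmul_eq_mul,
    sumR1, sumI1, sumI2, sumR2, ← Finset.mul_sum, ← Finset.sum_mul, Nat.card_Icc,
    Nat.add_sub_cancel]
  push_cast; ring

lemma uni (m n : ℕ) (hm : 0 < m) (hn : 0 < n) :
    ∑ k ∈ Icc 1 m, ∑ k₁ ∈ Icc 1 m, ∑ i ∈ range (n+1), ∑ i₁ ∈ range (n+1),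
      (((k₁:ℝ)-k)/m + ((i₁:ℝ)-i)/(m*n))^2
    = (n+1)^2*(m^2*n+2)/(6*n) := by
  have hm' : (m:ℝ) ≠ 0 := Nat.cast_ne_zero.2 hm.ne'
  have hn' : (n:ℝ) ≠ 0 := Nat.cast_ne_zero.2 hn.ne'
  have key : ∀ k k₁ i i₁ : ℕ,
      (((k₁:ℝ)-k)/m + ((i₁:ℝ)-i)/(m*n))^2
      = (1/((m:ℝ)*n))^2 * ((fun a b : ℕ => (a:ℝ)*n + b) k₁ i₁
          - (fun a b : ℕ => (a:ℝ)*n + b) k i)^2 := by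
    intro k k₁ i i₁
    beta_reduce
    field_simp
    ring
  simp only [key, ← Finset.mul_sum]
  have h4 := four m n (fun a b : ℕ => (a:ℝ)*n + b)
  beta_reduce at h4
  rw [h4, sumG1, sumG2]
  field_simp
  ring

/-- exact value of the double application of the composite Bernstein cubature
functional to the squared Euclidean distance on `[0,1]²`. -/
theorem stmt14 (n₁ n₂ m₁ m₂ : ℕ) (hn₁ : 0 < n₁) (hn₂ : 0 < n₂)
    (hm₁ : 0 < m₁) (hm₂ : 0 < m₂) :
    (∑ k ∈ Finset.Icc 1 m₁, ∑ k₁ ∈ Finset.Icc 1 m₁,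
      ∑ l ∈ Finset.Icc 1 m₂, ∑ l₁ ∈ Finset.Icc 1 m₂,
      ∑ i ∈ Finset.range (n₁ + 1), ∑ i₁ ∈ Finset.range (n₁ + 1),
      ∑ j ∈ Finset.range (n₂ + 1), ∑ j₁ ∈ Finset.range (n₂ + 1),
        (1 / ((m₁ : ℝ) ^ 2 * m₂ ^ 2 * (n₁ + 1) ^ 2 * (n₂ + 1) ^ 2)) *
          ((((k₁ : ℝ) - k) / m₁ + ((i₁ : ℝ) - i) / (m₁ * n₁)) ^ 2 +
            (((l₁ : ℝ) - l) / m₂ + ((j₁ : ℝ) - j) / (m₂ * n₂)) ^ 2)) =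
      (1 / 3) * (1 + 1 / ((m₁ : ℝ) ^ 2 * n₁) + 1 / ((m₂ : ℝ) ^ 2 * n₂)) := by
  have hU₁ := uni m₁ n₁ hm₁ hn₁
  have hU₂ := uni m₂ n₂ hm₂ hn₂
  have hm₁' : (m₁:ℝ) ≠ 0 := Nat.cast_ne_zero.2 hm₁.ne'
  have hm₂' : (m₂:ℝ) ≠ 0 := Nat.cast_ne_zero.2 hm₂.ne'
  have hn₁' : (n₁:ℝ) ≠ 0 := Nat.cast_ne_zero.2 hn₁.ne'
  have hn₂' : (n₂:ℝ) ≠ 0 := Nat.cast_ne_zero.2 hn₂.ne'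
  simp only [mul_add, Finset.sum_add_distrib, Finset.sum_const, Nat.card_Icc,
    Finset.card_range, nsmul_eq_mul, Nat.add_sub_cancel, ← Finset.mul_sum]
  rw [hU₁, hU₂]
  push_cast
  field_simp
  ring
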